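/- For every constant C ∈ ℝ one has the limit lim_{r→0⁺} F_*^{-1}(F_*(r)+C)/r = e^{C·|u_*'(0)|}. -/

import Mathlib

open Set Filter MeasureTheory intervalIntegral
open scoped Topology

/- STATEMENT 1: For every constant C ∈ ℝ one has
lim_{r→0⁺} F⁻¹(F(r)+C)/r = e^{C·|u'(0)|}. -/
theorem stmt_1
    (u F Finv : ℝ → ℝ) (C10 C20 : ℝ)
    (hC10 : 0 < C10) (hC20 : 0 < C20)
    (hu : ContDiffOn ℝ 1 u (Set.Icc 0 1))
    (hu_lb : ∀ r ∈ Set.Icc (0:ℝ) 1, -C10 * (r * (1 - r)) ≤ u r)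
    (hu_ub : ∀ r ∈ Set.Icc (0:ℝ) 1, u r ≤ -C20 * (r * (1 - r)))
    (hF : ∀ r ∈ Set.Ioo (0:ℝ) 1, F r = ∫ η in (1/2 : ℝ)..r, 1 / |u η|)
    (hF_mono : StrictMonoOn F (Set.Ioo 0 1))
    (hFinv_mem : ∀ x : ℝ, Finv x ∈ Set.Ioo (0:ℝ) 1)
    (hFinv_right : ∀ x : ℝ, F (Finv x) = x)
    (hFinv_left : ∀ r ∈ Set.Ioo (0:ℝ) 1, Finv (F r) = r)
    -- u'(0), which is negative, and the asymptotic assumption near r = 0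
    (u0' : ℝ) (hu0' : HasDerivWithinAt u u0' (Set.Icc 0 1) 0)
    (hu0'_neg : u0' < 0)
    (β M r₀ : ℝ) (hβ : β ∈ Set.Ioc (0:ℝ) 1) (hM : 0 < M) (hr₀ : r₀ ∈ Set.Ioo (0:ℝ) 1)
    (hasymp : ∀ r : ℝ, 0 < r → r ≤ r₀ → |u r - u0' * r| ≤ M * r ^ (1 + β))
    (C : ℝ) :
    Filter.Tendsto (fun r : ℝ => Finv (F r + C) / r)
      (nhdsWithin 0 (Set.Ioi 0)) (nhds (Real.exp (C * |u0'|))) := by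
  obtain ⟨hβ0, hβ1⟩ := hβ
  obtain ⟨hr₀0, hr₀1⟩ := hr₀
  set a : ℝ := -u0' with ha_def
  have ha : 0 < a := by simp only [ha_def]; linarith
  -- u is negative on (0,1), with quantitative bounds on |u|
  have hu_neg : ∀ r ∈ Set.Ioo (0:ℝ) 1, u r < 0 := by
    intro r hr
    have h1 := hu_ub r (Set.mem_Icc_of_Ioo hr)
    nlinarith [hr.1, hr.2, mul_pos hr.1 (by linarith [hr.2] : (0:ℝ) < 1 - r)]
  have hu_abs : ∀ r ∈ Set.Ioo (0:ℝ) 1, C20 * (r * (1-r)) ≤ |u r| := by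
    intro r hr
    rw [abs_of_neg (hu_neg r hr)]
    have := hu_ub r (Set.mem_Icc_of_Ioo hr); linarith
  have hu_abs_pos : ∀ r ∈ Set.Ioo (0:ℝ) 1, 0 < |u r| := fun r hr =>
    abs_pos.mpr (ne_of_lt (hu_neg r hr))
  have hu_cont : ContinuousOn u (Set.Icc 0 1) := hu.continuousOn
  -- the comparison function g
  set g : ℝ → ℝ := fun η => 1/|u η| - 1/(a*η) with hg_def
  have hg_cont : ContinuousOn g (Set.Ioo 0 1) := by
    apply ContinuousOn.sub
    · apply ContinuousOn.div continuousOn_const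
      · exact (hu_cont.mono Set.Ioo_subset_Icc_self).abs
      · intro x hx; exact ne_of_gt (hu_abs_pos x hx)
    · apply ContinuousOn.div continuousOn_const
      · exact (continuous_const.mul continuous_id).continuousOn
      · intro x hx; exact ne_of_gt (mul_pos ha hx.1)
  set c : ℝ := min r₀ (1/2) with hc_def
  have hc0 : 0 < c := lt_min hr₀0 (by norm_num)
  have hc2 : c ≤ 1/2 := min_le_right _ _
  have hcr : c ≤ r₀ := min_le_left _ _
  have hc1 : c < 1 := lt_of_le_of_lt hc2 (by norm_num)
  -- domination of g near 0
  set K : ℝ := 2*M/(a*C20) with hK_def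
  have hbound : ∀ η ∈ Set.Ioc (0:ℝ) c, |g η| ≤ K * η ^ (β - 1) := by
    intro η hη
    have hη0 : 0 < η := hη.1
    have hη2 : η ≤ 1/2 := hη.2.trans hc2
    have hη1 : η < 1 := lt_of_le_of_lt hη2 (by norm_num)
    have hmem : η ∈ Set.Ioo (0:ℝ) 1 := ⟨hη0, hη1⟩
    have hA : 0 < |u η| := hu_abs_pos η hmem
    have hB : 0 < a * η := mul_pos ha hη0
    have hgval : g η = (a*η - |u η|) / (|u η| * (a*η)) := by
      rw [hg_def]
      field_simp
    have hnum : abs (a*η - |u η|) ≤ M * η ^ (1+β) := by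
      rw [abs_of_neg (hu_neg η hmem)]
      have heq : a*η - -(u η) = u η - u0' * η := by rw [ha_def]; ring
      rw [heq]
      exact hasymp η hη0 (hη.2.trans hcr)
    have hden : (a * C20 / 2) * η^2 ≤ |u η| * (a*η) := by
      have h1 : C20 * (η * (1-η)) ≤ |u η| := hu_abs η hmem
      have h2 : C20 * (η/2) ≤ |u η| := by nlinarith
      nlinarith [mul_le_mul_of_nonneg_right h2 hB.le]
    have hden0 : 0 < (a * C20 / 2) * η^2 := by positivity
    calc |g η| = abs (a*η - |u η|) / (|u η| * (a*η)) := by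
          rw [hgval, abs_div, abs_of_pos (mul_pos hA hB)]
      _ ≤ (M * η ^ (1+β)) / ((a * C20 / 2) * η^2) := by
          apply div_le_div₀ (by positivity) hnum hden0 hden
      _ = K * η ^ (β - 1) := by
          rw [hK_def, show (1+β) = (β - 1) + 2 by ring, Real.rpow_add hη0,
            show ((2:ℝ)) = ((2:ℕ):ℝ) by norm_num, Real.rpow_natCast]
          have hη0' : η ≠ 0 := ne_of_gt hη0
          field_simp
  -- integrability of g on [0,c]
  have hdom_int : IntervalIntegrable (fun η : ℝ => K * η ^ (β-1)) volume 0 c :=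
    (intervalIntegral.intervalIntegrable_rpow' (by linarith)).const_mul K
  have hg_meas : AEStronglyMeasurable g (volume.restrict (Set.uIoc 0 c)) := by
    rw [Set.uIoc_of_le hc0.le]
    exact (hg_cont.mono (fun x hx => ⟨hx.1, lt_of_le_of_lt hx.2 hc1⟩)).aestronglyMeasurable
      measurableSet_Ioc
  have hg_int0 : IntervalIntegrable g volume 0 c := by
    refine hdom_int.mono_fun' hg_meas ?_
    rw [Filter.EventuallyLE, Set.uIoc_of_le hc0.le, ae_restrict_iff' measurableSet_Ioc]
    exact Filter.Eventually.of_forall (fun η hη => by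
      rw [Real.norm_eq_abs]; exact hbound η hη)
  -- integrability of g on compact subintervals of (0,1)
  have hsub : ∀ d e : ℝ, d ∈ Set.Ioo (0:ℝ) 1 → e ∈ Set.Ioo (0:ℝ) 1 →
      Set.uIcc d e ⊆ Set.Ioo (0:ℝ) 1 := by
    intro d e hd he x hx
    rw [Set.mem_uIcc] at hx
    rcases hx with ⟨h1, h2⟩ | ⟨h1, h2⟩
    · exact ⟨lt_of_lt_of_le hd.1 h1, lt_of_le_of_lt h2 he.2⟩
    · exact ⟨lt_of_lt_of_le he.1 h1, lt_of_le_of_lt h2 hd.2⟩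
  have hg_int : ∀ d e : ℝ, d ∈ Set.Ioo (0:ℝ) 1 → e ∈ Set.Ioo (0:ℝ) 1 →
      IntervalIntegrable g volume d e := fun d e hd he =>
    (hg_cont.mono (hsub d e hd he)).intervalIntegrable
  have hhalf : (1/2:ℝ) ∈ Set.Ioo (0:ℝ) 1 := by norm_num
  -- the shifted function G
  set G : ℝ → ℝ := fun r => F r - (1/a) * Real.log r with hG_def
  have hG_eq : ∀ r ∈ Set.Ioo (0:ℝ) 1,
      G r = (∫ η in (1/2:ℝ)..r, g η) - (1/a) * Real.log (1/2) := by
    intro r hr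
    have hint_u : IntervalIntegrable (fun η => 1/|u η|) volume (1/2) r := by
      apply ContinuousOn.intervalIntegrable
      apply ContinuousOn.mono _ (hsub _ _ hhalf hr)
      apply ContinuousOn.div continuousOn_const
      · exact (hu_cont.mono Set.Ioo_subset_Icc_self).abs
      · intro x hx; exact ne_of_gt (hu_abs_pos x hx)
    have hint_inv : IntervalIntegrable (fun η => 1/(a*η)) volume (1/2) r := by
      apply ContinuousOn.intervalIntegrable
      apply ContinuousOn.mono _ (hsub _ _ hhalf hr)
      apply ContinuousOn.div continuousOn_const
      · exact (continuous_const.mul continuous_id).continuousOn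
      · intro x hx; exact ne_of_gt (mul_pos ha hx.1)
    have h0notin : (0:ℝ) ∉ Set.uIcc (1/2) r := fun h => (hsub _ _ hhalf hr h).1.false
    have hlog : (∫ η in (1/2:ℝ)..r, 1/(a*η)) = (1/a) * (Real.log r - Real.log (1/2)) := by
      have h1 : (∫ η in (1/2:ℝ)..r, 1/(a*η)) = ∫ η in (1/2:ℝ)..r, (1/a) * (1/η) := by
        congr 1; funext η; rw [one_div, one_div, one_div, mul_inv]
      rw [h1, intervalIntegral.integral_const_mul, integral_one_div h0notin,
        Real.log_div (ne_of_gt hr.1) (by norm_num)]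
    have hsplit : (∫ η in (1/2:ℝ)..r, g η)
        = (∫ η in (1/2:ℝ)..r, 1/|u η|) - ∫ η in (1/2:ℝ)..r, 1/(a*η) :=
      intervalIntegral.integral_sub hint_u hint_inv
    rw [hG_def]
    simp only
    rw [hF r hr, hsplit, hlog]
    ring
  -- splitting the integral for small r
  have hsplit2 : ∀ r ∈ Set.Ioo (0:ℝ) c,
      (∫ η in (1/2:ℝ)..r, g η) = (∫ η in (1/2:ℝ)..c, g η) - ∫ t in r..c, g t := by
    intro r hr
    have hrm : r ∈ Set.Ioo (0:ℝ) 1 := ⟨hr.1, hr.2.trans hc1⟩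
    have hcm : c ∈ Set.Ioo (0:ℝ) 1 := ⟨hc0, hc1⟩
    rw [eq_sub_iff_add_eq]
    exact intervalIntegral.integral_add_adjacent_intervals
      (hg_int _ _ hhalf hrm) (hg_int _ _ hrm hcm)
  -- convergence of the primitive as r → 0⁺
  have hIcc : IntegrableOn g (Set.Icc 0 c) volume :=
    (intervalIntegrable_iff_integrableOn_Icc_of_le hc0.le).1 hg_int0
  have hprim : Tendsto (fun x => ∫ t in x..c, g t) (𝓝[>](0:ℝ))
      (𝓝 (∫ t in (0:ℝ)..c, g t)) := by
    have hcont : ContinuousOn (fun x => ∫ t in x..c, g t) (Set.uIcc 0 c) := by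
      apply intervalIntegral.continuousOn_primitive_interval_left
      rwa [Set.uIcc_of_le hc0.le]
    have h1 : ContinuousWithinAt (fun x => ∫ t in x..c, g t) (Set.uIcc 0 c) 0 :=
      hcont 0 Set.left_mem_uIcc
    have h2 : Tendsto (fun x => ∫ t in x..c, g t) (𝓝[Set.Ioc 0 c] (0:ℝ))
        (𝓝 (∫ t in (0:ℝ)..c, g t)) := by
      apply h1.mono_left (nhdsWithin_mono 0 _)
      rw [Set.uIcc_of_le hc0.le]
      exact Set.Ioc_subset_Icc_self
    rwa [nhdsWithin_Ioc_eq_nhdsGT hc0] at h2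
  set L : ℝ := (∫ η in (1/2:ℝ)..c, g η) - (∫ t in (0:ℝ)..c, g t)
    - (1/a) * Real.log (1/2) with hL_def
  have hGlim : Tendsto G (𝓝[>](0:ℝ)) (𝓝 L) := by
    have h2 : Tendsto (fun r => (∫ η in (1/2:ℝ)..c, g η) - (∫ t in r..c, g t)
        - (1/a) * Real.log (1/2)) (𝓝[>](0:ℝ)) (𝓝 L) :=
      (tendsto_const_nhds.sub hprim).sub tendsto_const_nhds
    apply h2.congr'
    filter_upwards [Ioo_mem_nhdsGT_of_mem ⟨le_refl (0:ℝ), hc0⟩] with r hr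
    rw [hG_eq r ⟨hr.1, hr.2.trans hc1⟩, hsplit2 r hr]
  -- F r + C → -∞ as r → 0⁺
  have hF_bot : Tendsto (fun r => F r + C) (𝓝[>](0:ℝ)) atBot := by
    have h1 : Tendsto (fun r : ℝ => (1/a) * Real.log r) (𝓝[>](0:ℝ)) atBot :=
      Real.tendsto_log_nhdsGT_zero.const_mul_atBot (by positivity)
    have h2 : Tendsto (fun r => (G r + (1/a) * Real.log r) + C) (𝓝[>](0:ℝ)) atBot :=
      tendsto_atBot_add_const_right _ C (hGlim.add_atBot h1)
    apply h2.congr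
    intro r
    rw [hG_def]
    ring
  -- Finv tends to 0⁺ at -∞
  have hFinv_bot : Tendsto Finv atBot (𝓝[>] (0:ℝ)) := by
    refine tendsto_nhdsWithin_iff.2 ⟨?_, Filter.Eventually.of_forall (fun x => (hFinv_mem x).1)⟩
    refine tendsto_order.2 ⟨?_, ?_⟩
    · intro b hb
      exact Filter.Eventually.of_forall (fun x => lt_trans hb (hFinv_mem x).1)
    · intro b hb
      set ε : ℝ := min b (1/2) with hε_def
      have hε : ε ∈ Set.Ioo (0:ℝ) 1 :=
        ⟨lt_min hb (by norm_num), lt_of_le_of_lt (min_le_right _ _) (by norm_num)⟩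
      filter_upwards [eventually_lt_atBot (F ε)] with x hx
      by_contra h
      push_neg at h
      have hεle : ε ≤ Finv x := le_trans (min_le_left _ _) h
      have hmono := hF_mono.monotoneOn hε (hFinv_mem x) hεle
      rw [hFinv_right x] at hmono
      linarith
  have hs_lim : Tendsto (fun r => Finv (F r + C)) (𝓝[>](0:ℝ)) (𝓝[>] (0:ℝ)) :=
    hFinv_bot.comp hF_bot
  have hGs : Tendsto (fun r => G (Finv (F r + C))) (𝓝[>](0:ℝ)) (𝓝 L) :=
    hGlim.comp hs_lim
  have hGlim' : Tendsto G (𝓝[>](0:ℝ)) (𝓝 L) := hGlim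
  -- main convergence of the exponential expression
  have hfinal : Tendsto (fun r => Real.exp (a * (C + G r - G (Finv (F r + C)))))
      (𝓝[>](0:ℝ)) (𝓝 (Real.exp (a * C))) := by
    have harg : Tendsto (fun r => a * (C + G r - G (Finv (F r + C)))) (𝓝[>](0:ℝ))
        (𝓝 (a * (C + L - L))) :=
      tendsto_const_nhds.mul ((tendsto_const_nhds.add hGlim').sub hGs)
    have := (Real.continuous_exp.continuousAt (x := a * (C + L - L))).tendsto.comp harg
    simpa [Function.comp_def] using this
  have habsC : C * |u0'| = a * C := by rw [abs_of_neg hu0'_neg]; ring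
  rw [habsC]
  apply hfinal.congr'
  filter_upwards [Ioo_mem_nhdsGT_of_mem ⟨le_refl (0:ℝ), (zero_lt_one : (0:ℝ) < 1)⟩] with r hr
  have hsmem := hFinv_mem (F r + C)
  have hFs : F (Finv (F r + C)) = F r + C := hFinv_right _
  have hid : a * (C + G r - G (Finv (F r + C)))
      = Real.log (Finv (F r + C)) - Real.log r := by
    rw [hG_def]
    simp only [hFs]
    field_simp
    ring
  rw [hid, Real.exp_sub, Real.exp_log hsmem.1, Real.exp_log hr.1]
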